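/- Let a : (0, ε₀) → (0, ∞) be an increasing function, left-continuous (lim_{t→s⁻} a(t) = a(s)), let g be a positive increasing function, and suppose that for all 0 < s, t with s + t < ε₀, t ≤ a(s+t)/(a(s)·g(1/a(s+t))). Fix 0 < D < ε₀ and define s₀ = sup{ 0 < s < D : a(D) > e·a(s) }. Then s₀ < D and D − s₀ ≤ e/g(1/a(D)). -/

import Mathlib

open Real

/-- Key step in the proof of Theorem 5.4: if `a : (0,ε₀) → (0,∞)` is increasing
and left-continuous, `g` is positive increasing, and
`t ≤ a(s+t)/(a(s)·g(1/a(s+t)))` for all `0 < s, t` with `s + t < ε₀`, then with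
`s₀ = sup{0 < s < D : a(D) > e·a(s)}` one has `s₀ < D` and
`D − s₀ ≤ e / g(1/a(D))`. -/
theorem stmt_11 (ε₀ : ℝ) (hε₀ : 0 < ε₀) (a g : ℝ → ℝ)
    (hapos : ∀ s : ℝ, 0 < s → s < ε₀ → 0 < a s)
    (hamono : MonotoneOn a (Set.Ioo 0 ε₀))
    (haleft : ∀ s : ℝ, 0 < s → s < ε₀ →
      Filter.Tendsto a (nhdsWithin s (Set.Iio s)) (nhds (a s)))
    (hgpos : ∀ x : ℝ, 0 < x → 0 < g x)
    (hgmono : MonotoneOn g (Set.Ioi (0 : ℝ)))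
    (hfun : ∀ s t : ℝ, 0 < s → 0 < t → s + t < ε₀ →
      t ≤ a (s + t) / (a s * g (1 / a (s + t))))
    (D : ℝ) (hD0 : 0 < D) (hDε : D < ε₀)
    (s₀ : ℝ) (hs₀ : s₀ = sSup {s : ℝ | 0 < s ∧ s < D ∧ exp 1 * a s < a D}) :
    s₀ < D ∧ D - s₀ ≤ exp 1 / g (1 / a D) := by
  set S : Set ℝ := {s : ℝ | 0 < s ∧ s < D ∧ exp 1 * a s < a D} with hS
  have haD : 0 < a D := hapos D hD0 hDε
  have hgD : 0 < g (1 / a D) := hgpos _ (by positivity)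
  have he1 : (1 : ℝ) < exp 1 := by
    have := Real.exp_one_gt_d9; linarith
  -- s₀ ≥ 0
  have hs₀0 : 0 ≤ s₀ := by
    rw [hs₀]
    exact Real.sSup_nonneg (fun x hx => hx.1.le)
  have hbdd : BddAbove S := ⟨D, fun x hx => hx.2.1.le⟩
  -- s₀ < D, via left continuity at D
  have hlt : a D / exp 1 < a D := div_lt_self haD he1
  have hev : ∀ᶠ t in nhdsWithin D (Set.Iio D), a D / exp 1 < a t :=
    (haleft D hD0 hDε).eventually (eventually_gt_nhds hlt)
  obtain ⟨l, hlD, hl⟩ := (mem_nhdsLT_iff_exists_Ioo_subset' (show D - 1 < D by linarith)).1 hev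
  have hs₀lt : s₀ < D := by
    have hub : ∀ x ∈ S, x ≤ max l 0 := by
      intro x hx
      by_contra hcon
      push_neg at hcon
      have hxl : l < x := lt_of_le_of_lt (le_max_left _ _) hcon
      have : a D / exp 1 < a x := hl ⟨hxl, hx.2.1⟩
      have : a D < exp 1 * a x := by
        rw [div_lt_iff₀ (by positivity : (0:ℝ) < exp 1)] at this
        linarith [this]
      linarith [hx.2.2]
    have : s₀ ≤ max l 0 := by
      rw [hs₀]
      rcases Set.eq_empty_or_nonempty S with h | h
      · rw [h, Real.sSup_empty]; exact le_max_right _ _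
      · exact csSup_le h hub
    have hmax : max l 0 < D := max_lt hlD hD0
    linarith
  refine ⟨hs₀lt, ?_⟩
  -- key pointwise bound
  have key : ∀ s : ℝ, s₀ < s → s < D → D - s ≤ exp 1 / g (1 / a D) := by
    intro s hss hsD
    have hs0 : 0 < s := lt_of_le_of_lt hs₀0 hss
    have hns : s ∉ S := by
      intro hmem
      exact absurd (le_csSup hbdd hmem) (by rw [← hs₀]; exact not_le.2 hss)
    have haDle : a D ≤ exp 1 * a s := by
      by_contra hcon
      push_neg at hcon
      exact hns ⟨hs0, hsD, hcon⟩
    have has : 0 < a s := hapos s hs0 (lt_trans hsD hDε)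
    have h1 : D - s ≤ a D / (a s * g (1 / a D)) := by
      have := hfun s (D - s) hs0 (by linarith) (by rw [add_sub_cancel]; exact hDε)
      rwa [add_sub_cancel] at this
    have h2 : a D / (a s * g (1 / a D)) ≤ exp 1 / g (1 / a D) := by
      rw [← div_div]
      have hq : a D / a s ≤ exp 1 := (div_le_iff₀ has).2 (by linarith)
      gcongr
    linarith
  -- limit argument
  refine le_of_forall_pos_le_add (fun ε hε => ?_)
  set s := min ((s₀ + D) / 2) (s₀ + ε) with hsdef
  have h1 : s₀ < s := lt_min (by linarith) (by linarith)
  have h2 : s < D := lt_of_le_of_lt (min_le_left _ _) (by linarith)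
  have h3 : s ≤ s₀ + ε := min_le_right _ _
  have := key s h1 h2
  linarith
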